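/- Let $\mathcal{T}$ be a finite index set, $(a_{j-i})$ a symmetric nonnegative kernel with $a_0 = 1$ (i.e., $a_{j-i} = a_{i-j} \ge 0$ for all $i,j$ and $a_{i-i}=1$). For $\bar p \in \mathbb{R}_{>0}^{\mathcal T}$ define $\psi_i(\bar p) = p_i / \sum_{j \in \mathcal T} a_{j-i} p_j$. Then for any $\bar x \in \mathbb{R}_{\ge 0}^{\mathcal T}$ and any $\bar p \in \mathbb{R}_{>0}^{\mathcal T}$, $\sum_i x_i^2 / \psi_i(\bar x) \le \sum_i x_i^2 / \psi_i(\bar p)$ (with the convention $0/0 = 0$), i.e., the choice $\bar p = \bar x$ minimizes $\sum_i x_i^2/\psi_i(\bar p)$ over all positive vectors $\bar p$. -/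

import Mathlib

theorem stmt_1 {T : Type*} [Fintype T] [AddCommGroup T]
    (a : T → ℝ) (ha_symm : ∀ j, a (-j) = a j) (ha_nonneg : ∀ j, 0 ≤ a j)
    (ha0 : a 0 = 1)
    (x p : T → ℝ) (hx : ∀ i, 0 ≤ x i) (hp : ∀ i, 0 < p i) :
    ∑ i, x i ^ 2 / (x i / ∑ j, a (j - i) * x j) ≤
      ∑ i, x i ^ 2 / (p i / ∑ j, a (j - i) * p j) := by
  have hL : ∀ i, x i ^ 2 / (x i / ∑ j, a (j - i) * x j)
      = ∑ j, a (j - i) * x i * x j := by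
    intro i
    rcases eq_or_lt_of_le (hx i) with h0 | h0
    · simp [← h0]
    · have hne : x i ≠ 0 := ne_of_gt h0
      rw [show x i ^ 2 / (x i / ∑ j, a (j - i) * x j)
          = x i * ∑ j, a (j - i) * x j by field_simp, Finset.mul_sum]
      exact Finset.sum_congr rfl fun j _ => by ring
  have hR : ∀ i, x i ^ 2 / (p i / ∑ j, a (j - i) * p j)
      = ∑ j, a (j - i) * x i ^ 2 * p j / p i := by
    intro i
    rw [div_div_eq_mul_div, Finset.mul_sum, Finset.sum_div]
    exact Finset.sum_congr rfl fun j _ => by ring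
  simp only [hL, hR]
  rw [← mul_le_mul_iff_right₀ (show (0:ℝ) < 2 by norm_num)]
  have key : (2:ℝ) * ∑ i, ∑ j, a (j - i) * x i ^ 2 * p j / p i
      = (∑ i, ∑ j, a (j - i) * x i ^ 2 * p j / p i)
        + ∑ i, ∑ j, a (j - i) * x j ^ 2 * p i / p j := by
    rw [two_mul]
    congr 1
    rw [Finset.sum_comm]
    refine Finset.sum_congr rfl fun i _ => Finset.sum_congr rfl fun j _ => ?_
    have : a (i - j) = a (j - i) := by rw [← ha_symm (j - i), neg_sub]
    rw [this]
  rw [key, ← Finset.sum_add_distrib]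
  rw [two_mul, ← Finset.sum_add_distrib]
  refine Finset.sum_le_sum fun i _ => ?_
  rw [← Finset.sum_add_distrib, ← Finset.sum_add_distrib]
  refine Finset.sum_le_sum fun j _ => ?_
  have hpi := hp i
  have hpj := hp j
  have ha := ha_nonneg (j - i)
  rw [div_add_div _ _ (ne_of_gt hpi) (ne_of_gt hpj)]
  rw [le_div_iff₀ (by positivity)]
  nlinarith [sq_nonneg (x i * p j - x j * p i), mul_nonneg (mul_nonneg ha (hx i)) (hx j),
    sq_nonneg (x i - x j), mul_pos hpi hpj]
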